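/- arXiv:1206.3537 — 6 statements merged into one kernel-verified Lean document; each statement's English description precedes it below -/
import Mathlib

section
/- Let U be an N×M real matrix whose columns are orthonormal, H = U Uᵀ the associated orthogonal projection, Θ = I − H, and let K be an N×N real matrix. For n ≥ 1 set Kₙ = (KΘ)^{n−1}K. If the spectral radii satisfy Ψ(K) < 1 and Ψ(KΘ) < 1, then Uᵀ(I−K)^{−1}(I−Kᵀ)^{−1}U = (I − ∑_{n=1}^∞ UᵀKₙU)^{−1} · (I + ∑_{n,m=1}^∞ UᵀKₙΘKₘᵀU) · (I − ∑_{m=1}^∞ UᵀKₘᵀU)^{−1}, where the matrix series converge absolutely (entrywise) and the M×M matrix inverses exist. -/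
open Matrix

/-- The spectral radius of a real matrix: the supremum of the moduli of its
complex eigenvalues (its spectrum over `ℂ`). -/
noncomputable def specRad {N : ℕ} (A : Matrix (Fin N) (Fin N) ℝ) : ENNReal :=
  spectralRadius ℂ (A.map Complex.ofReal)

section Aux

open Filter Topology
open scoped ENNReal NNReal

attribute [local instance] Matrix.linftyOpNormedAddCommGroup Matrix.linftyOpNormedRing
  Matrix.linftyOpNormedAlgebra

private theorem entry_nnnorm_le' {p q : ℕ} (A : Matrix (Fin p) (Fin q) ℝ) (a : Fin p)
    (b : Fin q) : ‖A a b‖₊ ≤ ‖A‖₊ := by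
  rw [Matrix.linfty_opNNNorm_def]
  exact le_trans (Finset.single_le_sum (f := fun j => ‖A a j‖₊) (fun _ _ => zero_le)
    (Finset.mem_univ b)) (Finset.le_sup (f := fun i => ∑ j : Fin q, ‖A i j‖₊) (Finset.mem_univ a))

private theorem entry_abs_le' {p q : ℕ} (A : Matrix (Fin p) (Fin q) ℝ) (a : Fin p) (b : Fin q) :
    |A a b| ≤ ‖A‖ := by
  rw [← Real.norm_eq_abs, ← coe_nnnorm, ← coe_nnnorm]
  exact_mod_cast entry_nnnorm_le' A a b

private theorem norm_transpose_le' {p q : ℕ} (A : Matrix (Fin p) (Fin q) ℝ) :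
    ‖Aᵀ‖ ≤ p * ‖A‖ := by
  have h : ‖Aᵀ‖₊ ≤ p * ‖A‖₊ := by
    rw [Matrix.linfty_opNNNorm_def]
    refine Finset.sup_le fun b _ => ?_
    calc ∑ a, ‖Aᵀ b a‖₊ ≤ ∑ _a : Fin p, ‖A‖₊ :=
          Finset.sum_le_sum fun a _ => entry_nnnorm_le' A a b
      _ = p * ‖A‖₊ := by simp [mul_comm]
  exact_mod_cast h

private theorem nnnorm_map_ofReal' {p q : ℕ} (A : Matrix (Fin p) (Fin q) ℝ) :
    ‖A.map Complex.ofReal‖₊ = ‖A‖₊ := by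
  simp [Matrix.linfty_opNNNorm_def, Matrix.map_apply]

private theorem map_ofReal_pow {N : ℕ} (A : Matrix (Fin N) (Fin N) ℝ) (n : ℕ) :
    (A.map Complex.ofReal) ^ n = (A ^ n).map Complex.ofReal := by
  have := (map_pow Complex.ofRealHom.mapMatrix A n).symm
  simp only [RingHom.mapMatrix_apply] at this
  exact this

private theorem geom_bound {N : ℕ} (A : Matrix (Fin N) (Fin N) ℝ) (h : specRad A < 1) :
    ∃ C r : ℝ, 0 ≤ C ∧ 0 ≤ r ∧ r < 1 ∧ ∀ n : ℕ, ‖A ^ n‖ ≤ C * r ^ n := by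
  haveI : CompleteSpace (Matrix (Fin N) (Fin N) ℂ) := FiniteDimensional.complete ℂ _
  obtain ⟨r, hρr, hr1⟩ := ENNReal.lt_iff_exists_nnreal_btwn.mp h
  have hr1' : (r : ℝ) < 1 := by exact_mod_cast (ENNReal.coe_lt_one_iff.mp hr1)
  have hr0 : (0:ℝ) ≤ r := r.coe_nonneg
  have hgel := spectrum.pow_nnnorm_pow_one_div_tendsto_nhds_spectralRadius
    (A.map Complex.ofReal)
  have hev : ∀ᶠ n : ℕ in atTop,
      (‖(A.map Complex.ofReal) ^ n‖₊ : ℝ≥0∞) ^ (1/(n:ℝ)) < r :=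
    hgel.eventually_lt_const hρr
  obtain ⟨n₀, hn₀⟩ := eventually_atTop.mp hev
  have key : ∀ n : ℕ, n₀ ≤ n → 1 ≤ n → ‖A ^ n‖ ≤ (r:ℝ) ^ n := by
    intro n hn hn1
    have h1 := hn₀ n hn
    have hne : ((n:ℝ)) ≠ 0 := by positivity
    have h2 : ((‖(A.map Complex.ofReal) ^ n‖₊ : ℝ≥0∞) ^ (1/(n:ℝ))) ^ (n:ℝ)
        ≤ ((r : ℝ≥0∞)) ^ (n:ℝ) :=
      ENNReal.rpow_le_rpow h1.le (by positivity)
    rw [← ENNReal.rpow_mul, one_div, inv_mul_cancel₀ hne, ENNReal.rpow_one,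
      ENNReal.rpow_natCast, ← ENNReal.coe_pow, ENNReal.coe_le_coe] at h2
    rw [map_ofReal_pow, nnnorm_map_ofReal'] at h2
    calc ‖A ^ n‖ = ((‖A ^ n‖₊ : ℝ≥0) : ℝ) := by rw [coe_nnnorm]
      _ ≤ ((r ^ n : ℝ≥0) : ℝ) := by exact_mod_cast h2
      _ = (r:ℝ) ^ n := by push_cast; ring
  set C : ℝ := (∑ k ∈ Finset.range (n₀ + 1), ‖A ^ k‖ / (r:ℝ) ^ k) + 1 with hC
  have hrpos : (0:ℝ) < r := by
    have h0 : (0 : ℝ≥0∞) < (r : ℝ≥0∞) := lt_of_le_of_lt zero_le hρr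
    exact_mod_cast ENNReal.coe_pos.mp h0
  have hterm : ∀ k, 0 ≤ ‖A ^ k‖ / (r:ℝ) ^ k := fun k => by positivity
  have hC1 : 1 ≤ C := by
    rw [hC]
    have : 0 ≤ ∑ k ∈ Finset.range (n₀ + 1), ‖A ^ k‖ / (r:ℝ) ^ k :=
      Finset.sum_nonneg fun k _ => hterm k
    linarith
  refine ⟨C, r, by linarith, hr0, hr1', fun n => ?_⟩
  rcases le_or_gt n n₀ with hle | hgt
  · have hmem : n ∈ Finset.range (n₀ + 1) := Finset.mem_range.mpr (by omega)
    have h1 : ‖A ^ n‖ / (r:ℝ) ^ n ≤ C := by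
      rw [hC]
      have := Finset.single_le_sum (f := fun k => ‖A ^ k‖ / (r:ℝ) ^ k)
        (fun k _ => hterm k) hmem
      linarith
    have hrn : (0:ℝ) < (r:ℝ) ^ n := by positivity
    calc ‖A ^ n‖ = (‖A ^ n‖ / (r:ℝ) ^ n) * (r:ℝ) ^ n := by field_simp
      _ ≤ C * (r:ℝ) ^ n := mul_le_mul_of_nonneg_right h1 hrn.le
  · have hkey := key n (by omega) (by omega)
    calc ‖A ^ n‖ ≤ (r:ℝ) ^ n := hkey
      _ = 1 * (r:ℝ) ^ n := by ring
      _ ≤ C * (r:ℝ) ^ n := mul_le_mul_of_nonneg_right hC1 (by positivity)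

private theorem isUnit_one_sub_det {N : ℕ} (A : Matrix (Fin N) (Fin N) ℝ) (h : specRad A < 1) :
    IsUnit (1 - A).det := by
  haveI : CompleteSpace (Matrix (Fin N) (Fin N) ℂ) := FiniteDimensional.complete ℂ _
  have h1 : (1:ℂ) ∉ spectrum ℂ (A.map Complex.ofReal) := by
    intro hmem
    have hle : (‖(1:ℂ)‖₊ : ℝ≥0∞) ≤ spectralRadius ℂ (A.map Complex.ofReal) :=
      le_iSup₂ (f := fun k (_ : k ∈ spectrum ℂ (A.map Complex.ofReal)) => (‖k‖₊ : ℝ≥0∞))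
        1 hmem
    simp only [nnnorm_one, ENNReal.coe_one] at hle
    exact absurd h (not_lt.mpr hle)
  rw [spectrum.notMem_iff] at h1
  have h2 : IsUnit ((1 : Matrix (Fin N) (Fin N) ℂ) - A.map Complex.ofReal).det := by
    have := (Matrix.isUnit_iff_isUnit_det _).mp h1
    simpa using this
  have h3 : ((1 : Matrix (Fin N) (Fin N) ℝ) - A).map Complex.ofReal
      = (1 : Matrix (Fin N) (Fin N) ℂ) - A.map Complex.ofReal := by
    have := map_sub Complex.ofRealHom.mapMatrix (1 : Matrix (Fin N) (Fin N) ℝ) A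
    rw [map_one] at this
    simp only [RingHom.mapMatrix_apply] at this
    exact this
  rw [← h3] at h2
  have h4 : ((1 : Matrix (Fin N) (Fin N) ℝ) - A).det ≠ 0 := by
    intro h0
    have hz : (((1 : Matrix (Fin N) (Fin N) ℝ) - A).map Complex.ofReal).det = 0 := by
      have hmd := (RingHom.map_det Complex.ofRealHom (1 - A)).symm
      simp only [RingHom.mapMatrix_apply] at hmd
      rw [show ((1 : Matrix (Fin N) (Fin N) ℝ) - A).map Complex.ofReal
          = (1 - A).map Complex.ofRealHom from rfl, hmd, h0, map_zero]
    rw [hz] at h2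
    exact (by simp : ¬ IsUnit (0:ℂ)) h2
  exact isUnit_iff_ne_zero.mpr h4

private theorem hasSum_map_matrix {N M : ℕ} {ι : Type}
    (g : Matrix (Fin N) (Fin N) ℝ → Matrix (Fin M) (Fin M) ℝ)
    (hadd : ∀ X Y, g (X + Y) = g X + g Y) (hcont : Continuous g)
    {f : ι → Matrix (Fin N) (Fin N) ℝ} {a : Matrix (Fin N) (Fin N) ℝ} (h : HasSum f a) :
    HasSum (fun i => g (f i)) (g a) :=
  h.map (AddMonoidHom.mk' g hadd) hcont

private theorem hasSum_geom {N : ℕ} (x : Matrix (Fin N) (Fin N) ℝ)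
    (hdet : IsUnit (1 - x).det)
    (C r : ℝ) (hr0 : 0 ≤ r) (hr1 : r < 1)
    (hb : ∀ n : ℕ, ‖x ^ n‖ ≤ C * r ^ n) :
    HasSum (fun n : ℕ => x ^ n) (1 - x)⁻¹ := by
  haveI : CompleteSpace (Matrix (Fin N) (Fin N) ℝ) := FiniteDimensional.complete ℝ _
  have hsn : Summable (fun n : ℕ => ‖x ^ n‖) :=
    Summable.of_nonneg_of_le (fun n => norm_nonneg _) hb
      ((summable_geometric_of_lt_one hr0 hr1).mul_left C)
  have hs : Summable (fun n : ℕ => x ^ n) := hsn.of_norm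
  have h1 := hs.hasSum
  have h2 : Tendsto (fun n : ℕ => ∑ i ∈ Finset.range n, x ^ i) atTop (𝓝 (∑' n, x ^ n)) :=
    h1.tendsto_sum_nat
  have hx0 : Tendsto (fun n : ℕ => x ^ n) atTop (𝓝 0) := by
    apply tendsto_zero_iff_norm_tendsto_zero.mpr
    refine squeeze_zero (fun n => norm_nonneg _) hb ?_
    simpa using (tendsto_pow_atTop_nhds_zero_of_lt_one hr0 hr1).const_mul C
  have hgeom : ∀ n : ℕ, ∑ i ∈ Finset.range n, x ^ i = (1 - x)⁻¹ * (1 - x ^ n) := by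
    intro n
    have hmul : (1 - x) * ∑ i ∈ Finset.range n, x ^ i = 1 - x ^ n := by
      have hgs := mul_geom_sum x n
      have h' : -((x - 1) * ∑ i ∈ Finset.range n, x ^ i) = -(x ^ n - 1) := by rw [hgs]
      calc (1 - x) * ∑ i ∈ Finset.range n, x ^ i
          = -((x - 1) * ∑ i ∈ Finset.range n, x ^ i) := by noncomm_ring
        _ = -(x ^ n - 1) := h'
        _ = 1 - x ^ n := by noncomm_ring
    calc ∑ i ∈ Finset.range n, x ^ i
        = ((1 - x)⁻¹ * (1 - x)) * ∑ i ∈ Finset.range n, x ^ i := by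
          rw [Matrix.nonsing_inv_mul _ hdet, one_mul]
      _ = (1 - x)⁻¹ * (1 - x ^ n) := by rw [mul_assoc, hmul]
  have h3 : Tendsto (fun n : ℕ => ∑ i ∈ Finset.range n, x ^ i) atTop
      (𝓝 ((1 - x)⁻¹ * (1 - 0))) := by
    simp only [hgeom]
    exact Tendsto.const_mul _ (tendsto_const_nhds.sub hx0)
  have h4 := tendsto_nhds_unique h2 h3
  rw [sub_zero, mul_one] at h4
  rwa [h4] at h1

private theorem hasSum_mul_matrix {N : ℕ} {A B : ℕ → Matrix (Fin N) (Fin N) ℝ}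
    {SA SB : Matrix (Fin N) (Fin N) ℝ}
    (hA : HasSum A SA) (hB : HasSum B SB)
    (hAn : Summable fun n => ‖A n‖) (hBn : Summable fun n => ‖B n‖) :
    HasSum (fun nm : ℕ × ℕ => A nm.1 * B nm.2) (SA * SB) := by
  haveI : CompleteSpace (Matrix (Fin N) (Fin N) ℝ) := FiniteDimensional.complete ℝ _
  exact hA.mul hB (summable_mul_of_summable_norm hAn hBn)

set_option maxHeartbeats 1000000 in
/-- **Proposition 2 (multi-population resumming identity).**
Let `U` be an `N×M` real matrix with orthonormal columns (`Uᵀ U = I`),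
`H = U Uᵀ`, `Θ = I − H`, and `K` an `N×N` real matrix; for `n ≥ 1` set
`Kₙ = (KΘ)^{n−1}K`.  If `Ψ(K) < 1` and `Ψ(KΘ) < 1`, then the matrix series
converge absolutely entrywise, the `M×M` matrix inverses exist, and
`Uᵀ(I−K)⁻¹(I−Kᵀ)⁻¹U
  = (I − ∑ₙ UᵀKₙU)⁻¹ (I + ∑ₙₘ UᵀKₙΘKₘᵀU) (I − ∑ₘ UᵀKₘᵀU)⁻¹`. -/
theorem stmt1 {N M : ℕ} (U : Matrix (Fin N) (Fin M) ℝ)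
    (hU : Uᵀ * U = 1)
    (K Θ : Matrix (Fin N) (Fin N) ℝ)
    (hΘ : Θ = 1 - U * Uᵀ)
    (Kn : ℕ → Matrix (Fin N) (Fin N) ℝ)
    (hKn : ∀ n : ℕ, Kn (n + 1) = (K * Θ) ^ n * K)
    (hK : specRad K < 1) (hKΘ : specRad (K * Θ) < 1) :
    (∀ a b : Fin M, Summable (fun n : ℕ => |(Uᵀ * Kn (n + 1) * U) a b|)) ∧
    (∀ a b : Fin M, Summable (fun m : ℕ => |(Uᵀ * (Kn (m + 1))ᵀ * U) a b|)) ∧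
    (∀ a b : Fin M, Summable (fun nm : ℕ × ℕ =>
        |(Uᵀ * (Kn (nm.1 + 1) * Θ * (Kn (nm.2 + 1))ᵀ) * U) a b|)) ∧
    IsUnit (1 - ∑' n : ℕ, Uᵀ * Kn (n + 1) * U) ∧
    IsUnit (1 - ∑' m : ℕ, Uᵀ * (Kn (m + 1))ᵀ * U) ∧
    Uᵀ * (1 - K)⁻¹ * (1 - Kᵀ)⁻¹ * U =
      (1 - ∑' n : ℕ, Uᵀ * Kn (n + 1) * U)⁻¹ *
        (1 + ∑' nm : ℕ × ℕ, Uᵀ * (Kn (nm.1 + 1) * Θ * (Kn (nm.2 + 1))ᵀ) * U) *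
        (1 - ∑' m : ℕ, Uᵀ * (Kn (m + 1))ᵀ * U)⁻¹ := by
  haveI : CompleteSpace (Matrix (Fin N) (Fin N) ℝ) := FiniteDimensional.complete ℝ _
  -- projection identities
  have hΘT : Θᵀ = Θ := by rw [hΘ]; simp [transpose_sub, transpose_mul]
  have hΘU : Θ * U = 0 := by
    rw [hΘ, Matrix.sub_mul, Matrix.one_mul, Matrix.mul_assoc, hU, Matrix.mul_one, sub_self]
  have hUΘ : Uᵀ * Θ = 0 := by
    rw [hΘ, Matrix.mul_sub, Matrix.mul_one, ← Matrix.mul_assoc, hU, Matrix.one_mul, sub_self]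
  have hΘΘ : Θ * Θ = Θ := by
    have h1 : Θ * Θ = Θ * 1 - Θ * (U * Uᵀ) := by rw [← Matrix.mul_sub, ← hΘ]
    rw [h1, Matrix.mul_one, ← Matrix.mul_assoc, hΘU, Matrix.zero_mul, sub_zero]
  -- invertibility
  have hdK : IsUnit ((1 : Matrix (Fin N) (Fin N) ℝ) - K).det := isUnit_one_sub_det K hK
  have hdKΘ : IsUnit ((1 : Matrix (Fin N) (Fin N) ℝ) - K * Θ).det := isUnit_one_sub_det _ hKΘ
  set S : Matrix (Fin N) (Fin N) ℝ := (1 - K * Θ)⁻¹ * K with hSdef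
  have hSK : (1 - K * Θ) * S = K := by
    rw [hSdef, ← mul_assoc, Matrix.mul_nonsing_inv _ hdKΘ, one_mul]
  have hfact : (1 : Matrix (Fin N) (Fin N) ℝ) - K = (1 - K * Θ) * (1 - S * (U * Uᵀ)) := by
    have h1 : (1 - K * Θ) * (S * (U * Uᵀ)) = K * (U * Uᵀ) := by rw [← mul_assoc, hSK]
    rw [mul_sub, mul_one, h1, hΘ, mul_sub, mul_one]
    abel
  have hdSH : IsUnit ((1 : Matrix (Fin N) (Fin N) ℝ) - S * (U * Uᵀ)).det := by
    have h1 := hdK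
    rw [hfact, Matrix.det_mul] at h1
    exact isUnit_of_mul_isUnit_right h1
  have hdet_s : IsUnit ((1 : Matrix (Fin M) (Fin M) ℝ) - Uᵀ * S * U).det := by
    have h1 := Matrix.det_one_add_mul_comm (-(S * U)) Uᵀ
    have e1 : (1 : Matrix (Fin N) (Fin N) ℝ) + -(S * U) * Uᵀ = 1 - S * (U * Uᵀ) := by
      rw [Matrix.neg_mul, Matrix.mul_assoc, ← sub_eq_add_neg]
    have e2 : (1 : Matrix (Fin M) (Fin M) ℝ) + Uᵀ * -(S * U) = 1 - Uᵀ * S * U := by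
      rw [Matrix.mul_neg, ← sub_eq_add_neg, ← Matrix.mul_assoc]
    rw [e1, e2] at h1
    rw [← h1]
    exact hdSH
  have hunit_s : IsUnit ((1 : Matrix (Fin M) (Fin M) ℝ) - Uᵀ * S * U) :=
    (Matrix.isUnit_iff_isUnit_det _).mpr hdet_s
  have htrans_s : ((1 : Matrix (Fin M) (Fin M) ℝ) - Uᵀ * S * U)ᵀ = 1 - Uᵀ * Sᵀ * U := by
    simp only [transpose_sub, transpose_one, transpose_mul, transpose_transpose]
    rw [← Matrix.mul_assoc]
  have hdet_sT : IsUnit ((1 : Matrix (Fin M) (Fin M) ℝ) - Uᵀ * Sᵀ * U).det := by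
    rw [← htrans_s, Matrix.det_transpose]; exact hdet_s
  have hunit_sT : IsUnit ((1 : Matrix (Fin M) (Fin M) ℝ) - Uᵀ * Sᵀ * U) :=
    (Matrix.isUnit_iff_isUnit_det _).mpr hdet_sT
  -- push-through identity
  have hcomm : ((1 : Matrix (Fin M) (Fin M) ℝ) - Uᵀ * S * U) * Uᵀ
      = Uᵀ * (1 - S * (U * Uᵀ)) := by
    rw [Matrix.sub_mul, Matrix.one_mul, Matrix.mul_sub, Matrix.mul_one]
    congr 1
    rw [Matrix.mul_assoc, Matrix.mul_assoc]
  have hpush : Uᵀ * ((1 : Matrix (Fin N) (Fin N) ℝ) - S * (U * Uᵀ))⁻¹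
      = (1 - Uᵀ * S * U)⁻¹ * Uᵀ := by
    have key : ((1 - Uᵀ * S * U) * Uᵀ) * (1 - S * (U * Uᵀ))⁻¹ = Uᵀ := by
      rw [hcomm, Matrix.mul_assoc Uᵀ (1 - S * (U * Uᵀ)) ((1 - S * (U * Uᵀ))⁻¹),
        Matrix.mul_nonsing_inv _ hdSH, Matrix.mul_one]
    calc Uᵀ * (1 - S * (U * Uᵀ))⁻¹
        = ((1 - Uᵀ * S * U)⁻¹ * (1 - Uᵀ * S * U)) * (Uᵀ * (1 - S * (U * Uᵀ))⁻¹) := by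
          rw [Matrix.nonsing_inv_mul _ hdet_s, Matrix.one_mul]
      _ = (1 - Uᵀ * S * U)⁻¹ * (((1 - Uᵀ * S * U) * Uᵀ) * (1 - S * (U * Uᵀ))⁻¹) := by
          rw [Matrix.mul_assoc ((1 - Uᵀ * S * U)⁻¹) (1 - Uᵀ * S * U)
              (Uᵀ * (1 - S * (U * Uᵀ))⁻¹),
            ← Matrix.mul_assoc (1 - Uᵀ * S * U) Uᵀ ((1 - S * (U * Uᵀ))⁻¹)]
      _ = (1 - Uᵀ * S * U)⁻¹ * Uᵀ := by rw [key]
  have hinvKΘ : ((1 : Matrix (Fin N) (Fin N) ℝ) - K * Θ)⁻¹ = 1 + S * Θ := by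
    apply Matrix.inv_eq_right_inv
    rw [mul_add, mul_one, ← mul_assoc, hSK]
    abel
  have hL : Uᵀ * ((1 : Matrix (Fin N) (Fin N) ℝ) - K)⁻¹
      = (1 - Uᵀ * S * U)⁻¹ * (Uᵀ * (1 + S * Θ)) := by
    rw [hfact, Matrix.mul_inv_rev, hinvKΘ, ← Matrix.mul_assoc, hpush, Matrix.mul_assoc]
  have hR : ((1 : Matrix (Fin N) (Fin N) ℝ) - Kᵀ)⁻¹ * U
      = ((1 + Θ * Sᵀ) * U) * (1 - Uᵀ * Sᵀ * U)⁻¹ := by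
    have h1 := congrArg Matrix.transpose hL
    simp only [transpose_mul, Matrix.transpose_nonsing_inv, transpose_sub, transpose_add,
      transpose_one, transpose_transpose, hΘT] at h1
    rw [show Uᵀ * (Sᵀ * U) = Uᵀ * Sᵀ * U from (Matrix.mul_assoc _ _ _).symm] at h1
    exact h1
  -- middle identity
  have hUU1 : ∀ X : Matrix (Fin M) (Fin M) ℝ, Uᵀ * (U * X) = X := fun X => by
    rw [← Matrix.mul_assoc, hU, one_mul]
  have hUΘ0 : ∀ (p : ℕ) (X : Matrix (Fin N) (Fin p) ℝ), Uᵀ * (Θ * X) = 0 := fun p X => by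
    rw [← Matrix.mul_assoc, hUΘ, Matrix.zero_mul]
  have hΘU0 : ∀ (p : ℕ) (X : Matrix (Fin M) (Fin p) ℝ), Θ * (U * X) = 0 := fun p X => by
    rw [← Matrix.mul_assoc, hΘU, Matrix.zero_mul]
  have hΘΘ1 : ∀ (p : ℕ) (X : Matrix (Fin N) (Fin p) ℝ), Θ * (Θ * X) = Θ * X := fun p X => by
    rw [← Matrix.mul_assoc, hΘΘ]
  have hmid : (Uᵀ * (1 + S * Θ)) * ((1 + Θ * Sᵀ) * U) = 1 + Uᵀ * (S * Θ * Sᵀ) * U := by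
    simp only [Matrix.mul_add, Matrix.add_mul, mul_add, add_mul, Matrix.one_mul,
      Matrix.mul_one, one_mul, mul_one, Matrix.mul_assoc, hU, hUU1, hUΘ0, hΘU0,
      hΘU, hUΘ, hΘΘ1, hΘΘ, Matrix.mul_zero, Matrix.zero_mul, add_zero, zero_add]
  have hfinal : Uᵀ * ((1 : Matrix (Fin N) (Fin N) ℝ) - K)⁻¹ * (1 - Kᵀ)⁻¹ * U
      = (1 - Uᵀ * S * U)⁻¹ * (1 + Uᵀ * (S * Θ * Sᵀ) * U) * (1 - Uᵀ * Sᵀ * U)⁻¹ := by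
    calc Uᵀ * (1 - K)⁻¹ * (1 - Kᵀ)⁻¹ * U
        = (Uᵀ * (1 - K)⁻¹) * (((1 : Matrix (Fin N) (Fin N) ℝ) - Kᵀ)⁻¹ * U) := by
          rw [Matrix.mul_assoc]
      _ = ((1 - Uᵀ * S * U)⁻¹ * (Uᵀ * (1 + S * Θ)))
          * (((1 + Θ * Sᵀ) * U) * (1 - Uᵀ * Sᵀ * U)⁻¹) := by rw [hL, hR]
      _ = (1 - Uᵀ * S * U)⁻¹ * (((Uᵀ * (1 + S * Θ)) * ((1 + Θ * Sᵀ) * U))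
          * (1 - Uᵀ * Sᵀ * U)⁻¹) := by
          simp only [Matrix.mul_assoc]
      _ = (1 - Uᵀ * S * U)⁻¹ * (1 + Uᵀ * (S * Θ * Sᵀ) * U) * (1 - Uᵀ * Sᵀ * U)⁻¹ := by
          rw [hmid, ← Matrix.mul_assoc ((1 - Uᵀ * S * U)⁻¹) (1 + Uᵀ * (S * Θ * Sᵀ) * U)
            ((1 - Uᵀ * Sᵀ * U)⁻¹)]
  -- convergence
  obtain ⟨C, r, hC0, hr0, hr1, hb⟩ := geom_bound (K * Θ) hKΘ
  have hgeomsum : HasSum (fun n : ℕ => (K * Θ) ^ n) ((1 : Matrix (Fin N) (Fin N) ℝ) - K * Θ)⁻¹ :=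
    hasSum_geom _ hdKΘ C r hr0 hr1 hb
  have hS_hasSum : HasSum (fun n : ℕ => (K * Θ) ^ n * K) S := by
    have := hasSum_map_matrix (fun X => X * K) (fun X Y => Matrix.add_mul X Y K)
      (continuous_id.matrix_mul continuous_const) hgeomsum
    simpa only [← hSdef] using this
  have h1 : HasSum (fun n : ℕ => Uᵀ * Kn (n + 1) * U) (Uᵀ * S * U) := by
    have hh := hasSum_map_matrix (fun X => Uᵀ * X * U) (fun X Y => by simp only [Matrix.mul_add, Matrix.add_mul])
      ((continuous_const.matrix_mul continuous_id).matrix_mul continuous_const) hS_hasSum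
    simpa only [hKn] using hh
  have h2 : HasSum (fun m : ℕ => Uᵀ * (Kn (m + 1))ᵀ * U) (Uᵀ * Sᵀ * U) := by
    have hh := hasSum_map_matrix (fun X => Uᵀ * Xᵀ * U)
      (fun X Y => by simp only [transpose_add, Matrix.mul_add, Matrix.add_mul])
      ((continuous_const.matrix_mul continuous_id.matrix_transpose).matrix_mul
        continuous_const) hS_hasSum
    simpa only [hKn] using hh
  have hA : HasSum (fun n : ℕ => (K * Θ) ^ n * K * Θ) (S * Θ) :=
    hasSum_map_matrix (fun X => X * Θ) (fun X Y => Matrix.add_mul X Y Θ)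
      (continuous_id.matrix_mul continuous_const) hS_hasSum
  have hB : HasSum (fun m : ℕ => ((K * Θ) ^ m * K)ᵀ) Sᵀ :=
    hasSum_map_matrix (fun X => Xᵀ) (fun X Y => transpose_add X Y)
      continuous_id.matrix_transpose hS_hasSum
  -- norm bounds
  have hKn_norm : ∀ n : ℕ, ‖(K * Θ) ^ n * K‖ ≤ (C * ‖K‖) * r ^ n := fun n =>
    calc ‖(K * Θ) ^ n * K‖ ≤ ‖(K * Θ) ^ n‖ * ‖K‖ := Matrix.linfty_opNorm_mul _ _
      _ ≤ (C * r ^ n) * ‖K‖ := mul_le_mul_of_nonneg_right (hb n) (norm_nonneg K)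
      _ = (C * ‖K‖) * r ^ n := by ring
  have hA_bound : ∀ n : ℕ, ‖(K * Θ) ^ n * K * Θ‖ ≤ ((C * ‖K‖) * ‖Θ‖) * r ^ n := fun n =>
    calc ‖(K * Θ) ^ n * K * Θ‖ ≤ ‖(K * Θ) ^ n * K‖ * ‖Θ‖ := Matrix.linfty_opNorm_mul _ _
      _ ≤ ((C * ‖K‖) * r ^ n) * ‖Θ‖ :=
        mul_le_mul_of_nonneg_right (hKn_norm n) (norm_nonneg _)
      _ = ((C * ‖K‖) * ‖Θ‖) * r ^ n := by ring
  have hB_bound : ∀ m : ℕ, ‖((K * Θ) ^ m * K)ᵀ‖ ≤ ((N : ℝ) * (C * ‖K‖)) * r ^ m := fun m =>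
    calc ‖((K * Θ) ^ m * K)ᵀ‖ ≤ (N : ℝ) * ‖(K * Θ) ^ m * K‖ := norm_transpose_le' _
      _ ≤ (N : ℝ) * ((C * ‖K‖) * r ^ m) :=
        mul_le_mul_of_nonneg_left (hKn_norm m) (Nat.cast_nonneg N)
      _ = ((N : ℝ) * (C * ‖K‖)) * r ^ m := by ring
  have hgeo_summable : Summable (fun n : ℕ => r ^ n) := summable_geometric_of_lt_one hr0 hr1
  have hA_norm : Summable (fun n : ℕ => ‖(K * Θ) ^ n * K * Θ‖) :=
    Summable.of_nonneg_of_le (fun n => norm_nonneg _) hA_bound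
      (hgeo_summable.mul_left _)
  have hB_norm : Summable (fun m : ℕ => ‖((K * Θ) ^ m * K)ᵀ‖) :=
    Summable.of_nonneg_of_le (fun m => norm_nonneg _) hB_bound
      (hgeo_summable.mul_left _)
  have hprod := hasSum_mul_matrix hA hB hA_norm hB_norm
  have h3 : HasSum (fun nm : ℕ × ℕ => Uᵀ * (Kn (nm.1 + 1) * Θ * (Kn (nm.2 + 1))ᵀ) * U)
      (Uᵀ * (S * Θ * Sᵀ) * U) := by
    have hh := hasSum_map_matrix (fun X => Uᵀ * X * U) (fun X Y => by simp only [Matrix.mul_add, Matrix.add_mul])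
      ((continuous_const.matrix_mul continuous_id).matrix_mul continuous_const) hprod
    simpa only [hKn] using hh
  -- entrywise absolute summability
  have norm3 : ∀ (X : Matrix (Fin N) (Fin N) ℝ), ‖Uᵀ * X * U‖ ≤ ‖Uᵀ‖ * ‖X‖ * ‖U‖ := fun X =>
    le_trans (Matrix.linfty_opNorm_mul _ _)
      (mul_le_mul_of_nonneg_right (Matrix.linfty_opNorm_mul _ _) (norm_nonneg _))
  have habs1 : ∀ a b : Fin M, Summable (fun n : ℕ => |(Uᵀ * Kn (n + 1) * U) a b|) := by
    intro a b
    refine Summable.of_nonneg_of_le (fun n => abs_nonneg _) (fun n => ?_)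
      (hgeo_summable.mul_left (‖Uᵀ‖ * (C * ‖K‖) * ‖U‖))
    rw [hKn]
    calc |(Uᵀ * ((K * Θ) ^ n * K) * U) a b| ≤ ‖Uᵀ * ((K * Θ) ^ n * K) * U‖ :=
          entry_abs_le' _ a b
      _ ≤ ‖Uᵀ‖ * ‖(K * Θ) ^ n * K‖ * ‖U‖ := norm3 _
      _ ≤ ‖Uᵀ‖ * ((C * ‖K‖) * r ^ n) * ‖U‖ :=
        mul_le_mul_of_nonneg_right
          (mul_le_mul_of_nonneg_left (hKn_norm n) (norm_nonneg _)) (norm_nonneg _)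
      _ = (‖Uᵀ‖ * (C * ‖K‖) * ‖U‖) * r ^ n := by ring
  have habs2 : ∀ a b : Fin M, Summable (fun m : ℕ => |(Uᵀ * (Kn (m + 1))ᵀ * U) a b|) := by
    intro a b
    refine Summable.of_nonneg_of_le (fun m => abs_nonneg _) (fun m => ?_)
      (hgeo_summable.mul_left (‖Uᵀ‖ * ((N : ℝ) * (C * ‖K‖)) * ‖U‖))
    rw [hKn]
    calc |(Uᵀ * ((K * Θ) ^ m * K)ᵀ * U) a b| ≤ ‖Uᵀ * ((K * Θ) ^ m * K)ᵀ * U‖ :=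
          entry_abs_le' _ a b
      _ ≤ ‖Uᵀ‖ * ‖((K * Θ) ^ m * K)ᵀ‖ * ‖U‖ := norm3 _
      _ ≤ ‖Uᵀ‖ * (((N : ℝ) * (C * ‖K‖)) * r ^ m) * ‖U‖ :=
        mul_le_mul_of_nonneg_right
          (mul_le_mul_of_nonneg_left (hB_bound m) (norm_nonneg _)) (norm_nonneg _)
      _ = (‖Uᵀ‖ * ((N : ℝ) * (C * ‖K‖)) * ‖U‖) * r ^ m := by ring
  have habs3 : ∀ a b : Fin M, Summable (fun nm : ℕ × ℕ =>
      |(Uᵀ * (Kn (nm.1 + 1) * Θ * (Kn (nm.2 + 1))ᵀ) * U) a b|) := by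
    intro a b
    have hsum : Summable (fun nm : ℕ × ℕ =>
        ((‖Uᵀ‖ * ‖U‖ * ((C * ‖K‖) * ‖Θ‖)) * r ^ nm.1) * (((N : ℝ) * (C * ‖K‖)) * r ^ nm.2)) :=
      Summable.mul_of_nonneg (hgeo_summable.mul_left _) (hgeo_summable.mul_left _)
        (fun n => by positivity) (fun m => by positivity)
    refine Summable.of_nonneg_of_le (fun nm => abs_nonneg _) (fun nm => ?_) hsum
    rw [hKn, hKn]
    have hAB : ‖((K * Θ) ^ nm.1 * K * Θ) * ((K * Θ) ^ nm.2 * K)ᵀ‖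
        ≤ (((C * ‖K‖) * ‖Θ‖) * r ^ nm.1) * (((N : ℝ) * (C * ‖K‖)) * r ^ nm.2) := by
      calc ‖((K * Θ) ^ nm.1 * K * Θ) * ((K * Θ) ^ nm.2 * K)ᵀ‖
          ≤ ‖(K * Θ) ^ nm.1 * K * Θ‖ * ‖((K * Θ) ^ nm.2 * K)ᵀ‖ := Matrix.linfty_opNorm_mul _ _
        _ ≤ (((C * ‖K‖) * ‖Θ‖) * r ^ nm.1) * (((N : ℝ) * (C * ‖K‖)) * r ^ nm.2) :=
          mul_le_mul (hA_bound nm.1) (hB_bound nm.2) (norm_nonneg _) (by positivity)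
    calc |(Uᵀ * ((K * Θ) ^ nm.1 * K * Θ * ((K * Θ) ^ nm.2 * K)ᵀ) * U) a b|
        ≤ ‖Uᵀ * ((K * Θ) ^ nm.1 * K * Θ * ((K * Θ) ^ nm.2 * K)ᵀ) * U‖ := entry_abs_le' _ a b
      _ ≤ ‖Uᵀ‖ * ‖(K * Θ) ^ nm.1 * K * Θ * ((K * Θ) ^ nm.2 * K)ᵀ‖ * ‖U‖ := norm3 _
      _ ≤ ‖Uᵀ‖ * ((((C * ‖K‖) * ‖Θ‖) * r ^ nm.1) * (((N : ℝ) * (C * ‖K‖)) * r ^ nm.2)) * ‖U‖ :=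
        mul_le_mul_of_nonneg_right
          (mul_le_mul_of_nonneg_left hAB (norm_nonneg _)) (norm_nonneg _)
      _ = ((‖Uᵀ‖ * ‖U‖ * ((C * ‖K‖) * ‖Θ‖)) * r ^ nm.1) * (((N : ℝ) * (C * ‖K‖)) * r ^ nm.2) := by
        ring
  -- tsum identifications
  have ht1 : ∑' n : ℕ, Uᵀ * Kn (n + 1) * U = Uᵀ * S * U := h1.tsum_eq
  have ht2 : ∑' m : ℕ, Uᵀ * (Kn (m + 1))ᵀ * U = Uᵀ * Sᵀ * U := h2.tsum_eq
  have ht3 : ∑' nm : ℕ × ℕ, Uᵀ * (Kn (nm.1 + 1) * Θ * (Kn (nm.2 + 1))ᵀ) * U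
      = Uᵀ * (S * Θ * Sᵀ) * U := h3.tsum_eq
  refine ⟨habs1, habs2, habs3, ?_, ?_, ?_⟩
  · rw [ht1]; exact hunit_s
  · rw [ht2]; exact hunit_sT
  · rw [ht1, ht2, ht3]; exact hfinal
end Aux
end

section
/- Let u be a unit vector in ℝ^N, H = u uᵀ, Θ = I − H, K an arbitrary N×N real matrix, and for n ≥ 1 set Kₙ = (KΘ)^{n−1}K. Then for every integer i ≥ 1, uᵀK^i u = ∑_{(n₁,…,n_k) composition of i} ∏_{s=1}^k uᵀK_{n_s}u, where the sum runs over all ordered tuples (n₁,…,n_k) of positive integers with n₁+⋯+n_k = i. -/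
open Matrix

section Aux

variable {N : ℕ}

private lemma vecMulVec_mulVec_eq (u w : Fin N → ℝ) :
    (vecMulVec u u).mulVec w = (u ⬝ᵥ w) • u := by
  ext j
  simp only [vecMulVec, mulVec, dotProduct, Pi.smul_apply, smul_eq_mul, of_apply, Finset.sum_mul]
  exact Finset.sum_congr rfl fun x _ => by ring

private lemma dot_middle (u : Fin N → ℝ) (A B : Matrix (Fin N) (Fin N) ℝ) :
    u ⬝ᵥ (A * vecMulVec u u * B).mulVec u
      = (u ⬝ᵥ A.mulVec u) * (u ⬝ᵥ B.mulVec u) := by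
  rw [← mulVec_mulVec, ← mulVec_mulVec, vecMulVec_mulVec_eq, mulVec_smul, dotProduct_smul,
    smul_eq_mul, mul_comm]

private lemma dot_sum {ι : Type*} (u : Fin N → ℝ) (s : Finset ι)
    (M : ι → Matrix (Fin N) (Fin N) ℝ) :
    u ⬝ᵥ (∑ n ∈ s, M n).mulVec u = ∑ n ∈ s, u ⬝ᵥ (M n).mulVec u := by
  classical
  induction s using Finset.induction with
  | empty => simp
  | insert a s h ih => simp [Finset.sum_insert h, add_mulVec, dotProduct_add, ih]

/-- Telescoping matrix identity. -/
private lemma telescope (K H : Matrix (Fin N) (Fin N) ℝ) (i : ℕ) :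
    K ^ (i + 1) = (K * (1 - H)) ^ i * K
      + ∑ n ∈ Finset.range i, (K * (1 - H)) ^ n * K * H * K ^ (i - n) := by
  induction i with
  | zero => simp
  | succ i ih =>
    have h1 : ∀ n ∈ Finset.range i,
        (K * (1 - H)) ^ n * K * H * K ^ (i - n) * K
          = (K * (1 - H)) ^ n * K * H * K ^ (i + 1 - n) := by
      intro n hn
      rw [Finset.mem_range] at hn
      rw [mul_assoc _ (K ^ (i - n)) K, ← pow_succ]
      have he : i - n + 1 = i + 1 - n := by omega
      rw [he]
    have h2 : (K * (1 - H)) ^ i * K * K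
        = (K * (1 - H)) ^ (i + 1) * K + (K * (1 - H)) ^ i * K * H * K ^ (i + 1 - i) := by
      have hii : i + 1 - i = 1 := by omega
      rw [hii, pow_one, pow_succ]
      set A := (K * (1 - H)) ^ i
      noncomm_ring
    calc K ^ (i + 1 + 1) = K ^ (i + 1) * K := by rw [pow_succ]
      _ = ((K * (1 - H)) ^ i * K
            + ∑ n ∈ Finset.range i, (K * (1 - H)) ^ n * K * H * K ^ (i - n)) * K := by rw [ih]
      _ = (K * (1 - H)) ^ i * K * K
            + ∑ n ∈ Finset.range i, (K * (1 - H)) ^ n * K * H * K ^ (i - n) * K := by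
          rw [add_mul, Finset.sum_mul]
      _ = (K * (1 - H)) ^ (i + 1) * K
            + ∑ n ∈ Finset.range (i + 1), (K * (1 - H)) ^ n * K * H * K ^ (i + 1 - n) := by
          rw [Finset.sum_congr rfl h1, h2, Finset.sum_range_succ]
          abel

/-- The composition of `0` has empty blocks. -/
private lemma comp_zero_blocks (c : Composition 0) : c.blocks = [] := by
  cases h : c.blocks with
  | nil => rfl
  | cons a t =>
    have ha := c.blocks_pos (h ▸ (List.mem_cons_self : a ∈ a :: t))
    have hs := c.blocks_sum
    rw [h] at hs; simp at hs; omega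

/-- Splitting off the first block of a composition of `i+1`. -/
private def consEquiv (i : ℕ) :
    (Σ n : Fin (i + 1), Composition (i - (n : ℕ))) ≃ Composition (i + 1) where
  toFun p := ⟨((p.1 : ℕ) + 1) :: p.2.blocks,
    by
      intro j hj
      rcases List.mem_cons.1 hj with h | h
      · omega
      · exact p.2.blocks_pos h,
    by
      have h3 := p.2.blocks_sum
      have h2 : (p.1 : ℕ) < i + 1 := p.1.isLt
      simp only [List.sum_cons, h3]
      omega⟩
  invFun c := ⟨⟨c.blocks.headI - 1, by
      have hne : c.blocks ≠ [] := by
        intro h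
        have := c.blocks_sum
        rw [h] at this; simp at this
      obtain ⟨a, t, h⟩ := List.exists_cons_of_ne_nil hne
      have hs := c.blocks_sum
      have ha := c.blocks_pos (h ▸ (List.mem_cons_self : a ∈ a :: t))
      rw [h] at hs ⊢
      simp only [List.headI, List.sum_cons] at hs ⊢
      omega⟩,
    ⟨c.blocks.tail,
      fun {j} hj => c.blocks_pos (List.mem_of_mem_tail hj),
      by
        have hne : c.blocks ≠ [] := by
          intro h
          have := c.blocks_sum
          rw [h] at this; simp at this
        obtain ⟨a, t, h⟩ := List.exists_cons_of_ne_nil hne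
        have hs := c.blocks_sum
        have ha := c.blocks_pos (h ▸ (List.mem_cons_self : a ∈ a :: t))
        show c.blocks.tail.sum = i - (c.blocks.headI - 1)
        rw [h] at hs ⊢
        simp only [List.headI, List.tail_cons, List.sum_cons] at hs ⊢
        omega⟩⟩
  left_inv p := by
    rcases p with ⟨⟨n, hn⟩, ⟨bl, h1, h2⟩⟩
    rfl
  right_inv c := by
    have hne : c.blocks ≠ [] := by
      intro h
      have := c.blocks_sum
      rw [h] at this; simp at this
    obtain ⟨a, t, h⟩ := List.exists_cons_of_ne_nil hne
    have ha := c.blocks_pos (h ▸ (List.mem_cons_self : a ∈ a :: t))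
    ext1
    simp only [h, List.headI, List.tail_cons]
    congr 1
    omega

end Aux

/-- **Combinatorial identity (E:prop_r1).**
Let `u` be a unit vector in `ℝ^N`, `H = u uᵀ`, `Θ = I − H`, `K` an arbitrary
`N×N` real matrix, and `Kₙ = (KΘ)^{n−1}K` for `n ≥ 1`.  Then for every `i ≥ 1`,
`uᵀK^i u = ∑_{(n₁,…,n_k) composition of i} ∏_{s=1}^k uᵀK_{n_s}u`. -/
theorem stmt4 {N : ℕ} (u : Fin N → ℝ) (hu : u ⬝ᵥ u = 1)
    (K Θ : Matrix (Fin N) (Fin N) ℝ)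
    (hΘ : Θ = 1 - vecMulVec u u)
    (Kn : ℕ → Matrix (Fin N) (Fin N) ℝ)
    (hKn : ∀ n : ℕ, Kn (n + 1) = (K * Θ) ^ n * K)
    (i : ℕ) (hi : 1 ≤ i) :
    u ⬝ᵥ (K ^ i).mulVec u =
      ∑ c : Composition i,
        (c.blocks.map fun b => u ⬝ᵥ (Kn b).mulVec u).prod := by
  clear hi
  set f : ℕ → ℝ := fun b => u ⬝ᵥ (Kn b).mulVec u with hf
  -- prove the statement for all i by strong induction (including i = 0)
  induction i using Nat.strong_induction_on with
  | _ i IH =>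
    match i with
    | 0 =>
      -- LHS = 1, RHS = sum over the unique composition of 0
      have h0 : ∀ c : Composition 0, (c.blocks.map f).prod = 1 := by
        intro c; rw [comp_zero_blocks c]; simp
      rw [Finset.sum_congr rfl fun c _ => h0 c]
      simp [hu, Finset.card_univ, composition_card]
    | (i + 1) =>
      -- RHS: split off the first block
      have hrhs : (∑ c : Composition (i + 1), (c.blocks.map f).prod)
          = ∑ n : Fin (i + 1), f ((n : ℕ) + 1)
              * ∑ c : Composition (i - (n : ℕ)), (c.blocks.map f).prod := by
        rw [← Equiv.sum_comp (consEquiv i) (fun c => (c.blocks.map f).prod),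
          ← Finset.univ_sigma_univ, Finset.sum_sigma]
        refine Finset.sum_congr rfl fun n _ => ?_
        rw [Finset.mul_sum]
        refine Finset.sum_congr rfl fun c _ => ?_
        simp [consEquiv]
      -- LHS: telescoping identity
      have hlhs : u ⬝ᵥ (K ^ (i + 1)).mulVec u
          = ∑ n : Fin (i + 1), f ((n : ℕ) + 1) * (u ⬝ᵥ (K ^ (i - (n : ℕ))).mulVec u) := by
        have hK1 : ∀ n : ℕ, u ⬝ᵥ ((K * Θ) ^ n * K).mulVec u = f (n + 1) := by
          intro n; simp only [hf, hKn]
        rw [telescope K (vecMulVec u u) i, ← hΘ]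
        rw [add_mulVec, dotProduct_add, dot_sum]
        have hterm : ∀ n ∈ Finset.range i,
            u ⬝ᵥ ((K * Θ) ^ n * K * vecMulVec u u * K ^ (i - n)).mulVec u
              = f (n + 1) * (u ⬝ᵥ (K ^ (i - n)).mulVec u) := by
          intro n _
          rw [dot_middle u ((K * Θ) ^ n * K) (K ^ (i - n)), hK1]
        rw [Finset.sum_congr rfl hterm, hK1]
        rw [Fin.sum_univ_eq_sum_range (fun n => f (n + 1) * (u ⬝ᵥ (K ^ (i - n)).mulVec u))]
        rw [Finset.sum_range_succ]
        have : i - i = 0 := by omega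
        rw [this]
        simp only [pow_zero, one_mulVec, hu, mul_one]
        ring
      rw [hlhs, hrhs]
      refine Finset.sum_congr rfl fun n _ => ?_
      congr 1
      exact IH (i - (n : ℕ)) (by omega)
end

section
/- Let u be a unit vector in ℝ^N, H = u uᵀ, Θ = I − H, K an arbitrary N×N real matrix, and for n ≥ 1 set Kₙ = (KΘ)^{n−1}K. Then for all integers i, j ≥ 1, uᵀ K^i Θ (Kᵀ)^j u = ∑_{(n₁,…,n_{k+1}) composition of i} ∑_{(m₁,…,m_{l+1}) composition of j} (∏_{s=1}^k uᵀK_{n_s}u) · (uᵀK_{n_{k+1}} Θ K_{m_{l+1}}ᵀ u) · (∏_{t=1}^l uᵀK_{m_t}ᵀu). -/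
open Matrix

section Helpers

variable {N : ℕ}

private lemma getLastD_eq_getLast (l : List ℕ) (h : l ≠ []) :
    l.getLastD 0 = l.getLast h := by
  conv_lhs => rw [← List.dropLast_append_getLast h]
  exact List.getLastD_concat

private lemma dropLast_append_getLastD (l : List ℕ) (h : l ≠ []) :
    l.dropLast ++ [l.getLastD 0] = l := by
  rw [getLastD_eq_getLast l h]
  exact List.dropLast_append_getLast h

private lemma comp_blocks_ne_nil {i : ℕ} (hi : 1 ≤ i) (c : Composition i) :
    c.blocks ≠ [] := by
  intro h
  have := c.blocks_sum
  rw [h] at this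
  simp at this
  omega

private lemma comp_getLastD_pos {i : ℕ} (hi : 1 ≤ i) (c : Composition i) :
    1 ≤ c.blocks.getLastD 0 := by
  have h := comp_blocks_ne_nil hi c
  rw [getLastD_eq_getLast _ h]
  exact c.blocks_pos (List.getLast_mem h)

private lemma comp_dropLast_sum {i : ℕ} (hi : 1 ≤ i) (c : Composition i) :
    c.blocks.dropLast.sum + c.blocks.getLastD 0 = i := by
  have h := congrArg List.sum (dropLast_append_getLastD c.blocks (comp_blocks_ne_nil hi c))
  simpa [c.blocks_sum] using h

/-- Append a final block `1`. -/
private def ext1 {i : ℕ} (c : Composition i) : Composition (i + 1) :=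
  ⟨c.blocks ++ [1], by
    intro k hk
    rcases List.mem_append.1 hk with h | h
    · exact c.blocks_pos h
    · simp at h; omega, by simp [c.blocks_sum]⟩

/-- Increment the last block. -/
private def ext2 {i : ℕ} (hi : 1 ≤ i) (c : Composition i) : Composition (i + 1) :=
  ⟨c.blocks.dropLast ++ [c.blocks.getLastD 0 + 1], by
    intro k hk
    rcases List.mem_append.1 hk with h | h
    · exact c.blocks_pos ((List.dropLast_sublist c.blocks).mem h)
    · simp at h; omega, by
    have := comp_dropLast_sum hi c
    simp only [List.sum_append, List.sum_cons, List.sum_nil]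
    omega⟩

@[simp] private lemma ext1_blocks {i : ℕ} (c : Composition i) :
    (ext1 c).blocks = c.blocks ++ [1] := rfl

@[simp] private lemma ext2_blocks {i : ℕ} (hi : 1 ≤ i) (c : Composition i) :
    (ext2 hi c).blocks = c.blocks.dropLast ++ [c.blocks.getLastD 0 + 1] := rfl

/-- Compositions of `i+1` split according to whether the last block is `1`. -/
private def compEquiv (i : ℕ) (hi : 1 ≤ i) :
    Composition i ⊕ Composition i ≃ Composition (i + 1) where
  toFun := Sum.elim ext1 (ext2 hi)
  invFun c' :=
    if h : c'.blocks.getLastD 0 = 1 then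
      Sum.inl ⟨c'.blocks.dropLast, fun hk =>
          c'.blocks_pos ((List.dropLast_sublist c'.blocks).mem hk), by
        have := comp_dropLast_sum (by omega) c'
        omega⟩
    else
      Sum.inr ⟨c'.blocks.dropLast ++ [c'.blocks.getLastD 0 - 1], by
        intro k hk
        rcases List.mem_append.1 hk with h' | h'
        · exact c'.blocks_pos ((List.dropLast_sublist c'.blocks).mem h')
        · have := comp_getLastD_pos (by omega) c'
          rw [List.mem_singleton] at h'
          omega, by
        have h1 := comp_dropLast_sum (by omega) c'
        have h2 := comp_getLastD_pos (by omega) c'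
        simp only [List.sum_append, List.sum_cons, List.sum_nil]
        omega⟩
  left_inv := by
    rintro (c | c)
    · dsimp only [Sum.elim_inl]
      rw [dif_pos (by rw [ext1_blocks, List.getLastD_concat])]
      congr 1
      refine Composition.ext ?_
      show (ext1 c).blocks.dropLast = c.blocks
      rw [ext1_blocks]
      exact List.dropLast_concat
    · have hg := comp_getLastD_pos hi c
      dsimp only [Sum.elim_inr]
      rw [dif_neg (by rw [ext2_blocks, List.getLastD_concat]; omega)]
      congr 1
      refine Composition.ext ?_
      show (ext2 hi c).blocks.dropLast ++ [(ext2 hi c).blocks.getLastD 0 - 1] = c.blocks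
      rw [ext2_blocks, List.dropLast_concat, List.getLastD_concat]
      have he : c.blocks.getLastD 0 + 1 - 1 = c.blocks.getLastD 0 := by omega
      rw [he]
      exact dropLast_append_getLastD c.blocks (comp_blocks_ne_nil hi c)
  right_inv := by
    intro c'
    have hne : c'.blocks ≠ [] := comp_blocks_ne_nil (by omega) c'
    have hg := comp_getLastD_pos (Nat.le_add_left 1 i) c'
    dsimp only
    by_cases h : c'.blocks.getLastD 0 = 1
    · rw [dif_pos h]
      refine Composition.ext ?_
      show c'.blocks.dropLast ++ [1] = c'.blocks
      have := dropLast_append_getLastD c'.blocks hne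
      rw [h] at this
      exact this
    · rw [dif_neg h]
      refine Composition.ext ?_
      show (c'.blocks.dropLast ++ [c'.blocks.getLastD 0 - 1]).dropLast ++
          [(c'.blocks.dropLast ++ [c'.blocks.getLastD 0 - 1]).getLastD 0 + 1] = c'.blocks
      rw [List.dropLast_concat, List.getLastD_concat]
      have he : c'.blocks.getLastD 0 - 1 + 1 = c'.blocks.getLastD 0 := by omega
      rw [he]
      exact dropLast_append_getLastD c'.blocks hne

private lemma sum_comp_succ {M : Type*} [AddCommMonoid M] {i : ℕ} (hi : 1 ≤ i)
    (F : Composition (i + 1) → M) :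
    ∑ c' : Composition (i + 1), F c' =
      (∑ c : Composition i, F (ext1 c)) + ∑ c : Composition i, F (ext2 hi c) := by
  rw [← Equiv.sum_comp (compEquiv i hi) F, Fintype.sum_sum_type]
  rfl

/- linearity helpers -/
private lemma sum_dotProduct' {ι : Type*} (s : Finset ι) (f : ι → Fin N → ℝ) (w : Fin N → ℝ) :
    (∑ k ∈ s, f k) ⬝ᵥ w = ∑ k ∈ s, f k ⬝ᵥ w := by
  simp only [dotProduct, Finset.sum_apply, Finset.sum_mul]
  rw [Finset.sum_comm]

private lemma dotProduct_sum' {ι : Type*} (s : Finset ι) (w : Fin N → ℝ) (f : ι → Fin N → ℝ) :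
    w ⬝ᵥ (∑ k ∈ s, f k) = ∑ k ∈ s, w ⬝ᵥ f k := by
  simp only [dotProduct, Finset.sum_apply, Finset.mul_sum]
  rw [Finset.sum_comm]

private lemma sum_vecMul' {ι : Type*} (s : Finset ι) (f : ι → Fin N → ℝ)
    (M : Matrix (Fin N) (Fin N) ℝ) :
    (∑ k ∈ s, f k) ᵥ* M = ∑ k ∈ s, f k ᵥ* M := by
  ext j
  simp only [vecMul, dotProduct, Finset.sum_apply, Finset.sum_mul]
  rw [Finset.sum_comm]

private lemma vecMul_vecMulVec' (x u v : Fin N → ℝ) :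
    x ᵥ* vecMulVec u v = (x ⬝ᵥ u) • v := by
  ext j
  simp [vecMul, vecMulVec_apply, dotProduct, Finset.sum_mul, mul_assoc]

private lemma sandwich (u : Fin N → ℝ) (A Θ B : Matrix (Fin N) (Fin N) ℝ) :
    u ⬝ᵥ (A * Θ * Bᵀ) *ᵥ u = (u ᵥ* B) ⬝ᵥ ((u ᵥ* A) ᵥ* Θ) := by
  rw [dotProduct_mulVec, ← vecMul_vecMul, vecMul_transpose, dotProduct_comm,
    dotProduct_mulVec, vecMul_vecMul]

private lemma dP_transpose (u : Fin N → ℝ) (A : Matrix (Fin N) (Fin N) ℝ) :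
    u ⬝ᵥ Aᵀ *ᵥ u = u ⬝ᵥ A *ᵥ u := by
  rw [mulVec_transpose, dotProduct_comm, dotProduct_mulVec]

/-- The key expansion of `u ᵥ* K^i` over compositions. -/
private lemma vecMul_pow_eq (u : Fin N → ℝ) (K Θ : Matrix (Fin N) (Fin N) ℝ)
    (hΘ : Θ = 1 - vecMulVec u u)
    (Kn : ℕ → Matrix (Fin N) (Fin N) ℝ)
    (hKn : ∀ n : ℕ, Kn (n + 1) = (K * Θ) ^ n * K) :
    ∀ i, 1 ≤ i → u ᵥ* K ^ i =
      ∑ c : Composition i,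
        ((c.blocks.dropLast.map fun b => u ⬝ᵥ (Kn b).mulVec u).prod) •
          (u ᵥ* Kn (c.blocks.getLastD 0)) := by
  have hKn1 : Kn 1 = K := by simpa using hKn 0
  have hone : vecMulVec u u + Θ = 1 := by rw [hΘ]; exact add_sub_cancel _ _
  intro i hi
  induction i, hi using Nat.le_induction with
  | base =>
    have h1 : ∀ c : Composition 1, c.blocks = [1] := by
      intro c
      rcases hb : c.blocks with _ | ⟨a, t⟩
      · exact absurd hb (comp_blocks_ne_nil le_rfl c)
      · have hs := c.blocks_sum
        rw [hb] at hs
        have ha : 0 < a := c.blocks_pos (by rw [hb]; simp)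
        have ht : t = [] := by
          rcases t with _ | ⟨b, t'⟩
          · rfl
          · have hbpos : 0 < b := c.blocks_pos (by rw [hb]; simp)
            simp [List.sum_cons] at hs; omega
        subst ht
        simp [List.sum_cons] at hs
        simp [hs]
    have : ∀ c : Composition 1,
        ((c.blocks.dropLast.map fun b => u ⬝ᵥ (Kn b).mulVec u).prod) •
          (u ᵥ* Kn (c.blocks.getLastD 0)) = u ᵥ* K := by
      intro c
      rw [h1 c]
      simp [hKn1]
    rw [Finset.sum_congr rfl fun c _ => this c, Finset.sum_const, Finset.card_univ,
      composition_card]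
    simp
  | succ i hi IH =>
    have hsplit : K ^ (i + 1) = K ^ i * (vecMulVec u u * K) + K ^ i * (Θ * K) := by
      rw [pow_succ]
      calc K ^ i * K = K ^ i * ((vecMulVec u u + Θ) * K) := by rw [hone, one_mul]
        _ = _ := by rw [add_mul, mul_add]
    rw [hsplit, vecMul_add]
    -- term 1
    have h1 : u ᵥ* (K ^ i * (vecMulVec u u * K))
        = ∑ c : Composition i,
            (((c.blocks.dropLast.map fun b => u ⬝ᵥ (Kn b).mulVec u).prod) *
              (u ⬝ᵥ (Kn (c.blocks.getLastD 0)).mulVec u)) • (u ᵥ* K) := by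
      rw [← vecMul_vecMul, ← vecMul_vecMul, IH, sum_vecMul', sum_vecMul']
      refine Finset.sum_congr rfl fun c _ => ?_
      rw [smul_vecMul, vecMul_vecMulVec', smul_smul, smul_vecMul]
      congr 1
      rw [dotProduct_mulVec]
    -- term 2
    have h2 : u ᵥ* (K ^ i * (Θ * K))
        = ∑ c : Composition i,
            ((c.blocks.dropLast.map fun b => u ⬝ᵥ (Kn b).mulVec u).prod) •
              (u ᵥ* Kn (c.blocks.getLastD 0 + 1)) := by
      rw [← vecMul_vecMul, IH, sum_vecMul']
      refine Finset.sum_congr rfl fun c _ => ?_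
      rw [smul_vecMul, vecMul_vecMul]
      congr 2
      -- Kn g * (Θ * K) = Kn (g+1)
      obtain ⟨m, hm⟩ := Nat.exists_eq_add_of_le (comp_getLastD_pos hi c)
      rw [hm]
      have e1 : 1 + m = m + 1 := by omega
      rw [e1, hKn, hKn, pow_succ]
      simp only [mul_assoc]
    rw [h1, h2, sum_comp_succ hi]
    congr 1
    · refine Finset.sum_congr rfl fun c _ => ?_
      have hb : (ext1 c).blocks = c.blocks ++ [1] := rfl
      rw [hb, List.dropLast_concat, List.getLastD_concat, hKn1]
      congr 1
      conv_rhs => rw [← dropLast_append_getLastD c.blocks (comp_blocks_ne_nil hi c)]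
      rw [List.map_append, List.prod_append]
      simp
    · refine Finset.sum_congr rfl fun c _ => ?_
      have hb : (ext2 hi c).blocks = c.blocks.dropLast ++ [c.blocks.getLastD 0 + 1] := rfl
      rw [hb, List.dropLast_concat, List.getLastD_concat]

end Helpers

/-- **Combinatorial identity (E:prop_r2).**
Let `u` be a unit vector in `ℝ^N`, `H = u uᵀ`, `Θ = I − H`, `K` an arbitrary
`N×N` real matrix, and `Kₙ = (KΘ)^{n−1}K` for `n ≥ 1`.  Then for all `i, j ≥ 1`,
`uᵀ K^i Θ (Kᵀ)^j u
  = ∑_{(n₁,…,n_{k+1}) comp. of i} ∑_{(m₁,…,m_{l+1}) comp. of j}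
      (∏_{s=1}^k uᵀK_{n_s}u) (uᵀK_{n_{k+1}} Θ K_{m_{l+1}}ᵀ u) (∏_{t=1}^l uᵀK_{m_t}ᵀu)`,
where sums run over compositions (ordered tuples of positive integers summing to
`i`, resp. `j`), the last block of each composition indexing immediately the
middle factor, and empty products equal `1`. -/
theorem stmt5 {N : ℕ} (u : Fin N → ℝ) (hu : u ⬝ᵥ u = 1)
    (K Θ : Matrix (Fin N) (Fin N) ℝ)
    (hΘ : Θ = 1 - vecMulVec u u)
    (Kn : ℕ → Matrix (Fin N) (Fin N) ℝ)
    (hKn : ∀ n : ℕ, Kn (n + 1) = (K * Θ) ^ n * K)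
    (i j : ℕ) (hi : 1 ≤ i) (hj : 1 ≤ j) :
    u ⬝ᵥ (K ^ i * Θ * (Kᵀ) ^ j).mulVec u =
      ∑ c : Composition i, ∑ d : Composition j,
        (c.blocks.dropLast.map fun b => u ⬝ᵥ (Kn b).mulVec u).prod *
          (u ⬝ᵥ (Kn (c.blocks.getLastD 0) * Θ *
            (Kn (d.blocks.getLastD 0))ᵀ).mulVec u) *
          (d.blocks.dropLast.map fun b => u ⬝ᵥ ((Kn b)ᵀ).mulVec u).prod := by
  have hA := vecMul_pow_eq u K Θ hΘ Kn hKn i hi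
  have hB := vecMul_pow_eq u K Θ hΘ Kn hKn j hj
  have hT : (Kᵀ) ^ j = (K ^ j)ᵀ := (transpose_pow K j).symm
  rw [hT, sandwich u (K ^ i) Θ (K ^ j), hA, hB, sum_dotProduct']
  rw [Finset.sum_comm]
  refine Finset.sum_congr rfl fun c _ => ?_
  rw [sum_vecMul', dotProduct_sum']
  refine Finset.sum_congr rfl fun d _ => ?_
  rw [smul_vecMul, smul_dotProduct, dotProduct_smul,
    sandwich u (Kn (d.blocks.getLastD 0)) Θ (Kn (c.blocks.getLastD 0))]
  have hQ : (c.blocks.dropLast.map fun b => u ⬝ᵥ ((Kn b)ᵀ).mulVec u)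
      = c.blocks.dropLast.map fun b => u ⬝ᵥ (Kn b).mulVec u := by
    refine List.map_congr_left fun b _ => dP_transpose u (Kn b)
  rw [hQ]
  push_cast [smul_eq_mul]
  ring
end

section
/- Let W be any N×N real matrix, L = (1/N)·(1,…,1)ᵀ ∈ ℝ^N, H = N L Lᵀ, Θ = I − H, and set p = LᵀWL, q_ch = (1/N)LᵀWΘWL, q_div = (1/N)LᵀWΘWᵀL. Then LᵀW²(Wᵀ)²L = N³[p⁴ + p²q_div + 2p²q_ch + q_ch²] + LᵀWΘWΘWᵀΘWᵀL + N(LᵀWL)(LᵀWΘWᵀΘWᵀL) + N(LᵀWΘWΘWᵀL)(LᵀWᵀL). -/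
open Matrix

/-- **Decomposition of the fourth-order diverging motif (E:lin_sum2, exact form).**
Let `W` be any `N×N` real matrix, `L = (1/N)(1,…,1)ᵀ`, `H = N L Lᵀ`, `Θ = I − H`,
`p = LᵀWL`, `q_ch = (1/N)LᵀWΘWL`, `q_div = (1/N)LᵀWΘWᵀL`.  Then
`LᵀW²(Wᵀ)²L = N³[p⁴ + p²q_div + 2p²q_ch + q_ch²] + LᵀWΘWΘWᵀΘWᵀL
   + N(LᵀWL)(LᵀWΘWᵀΘWᵀL) + N(LᵀWΘWΘWᵀL)(LᵀWᵀL)`. -/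
theorem stmt11 {N : ℕ} (W : Matrix (Fin N) (Fin N) ℝ)
    (L : Fin N → ℝ) (hL : L = fun _ => 1 / (N : ℝ))
    (H Θ : Matrix (Fin N) (Fin N) ℝ)
    (hH : H = (N : ℝ) • vecMulVec L L) (hΘ : Θ = 1 - H)
    (p qch qdiv : ℝ)
    (hp : p = L ⬝ᵥ W.mulVec L)
    (hqch : qch = (1 / (N : ℝ)) * (L ⬝ᵥ (W * Θ * W).mulVec L))
    (hqdiv : qdiv = (1 / (N : ℝ)) * (L ⬝ᵥ (W * Θ * Wᵀ).mulVec L)) :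
    L ⬝ᵥ (W ^ 2 * (Wᵀ) ^ 2).mulVec L =
      (N : ℝ) ^ 3 * (p ^ 4 + p ^ 2 * qdiv + 2 * p ^ 2 * qch + qch ^ 2) +
        L ⬝ᵥ (W * Θ * W * Θ * Wᵀ * Θ * Wᵀ).mulVec L +
        (N : ℝ) * (L ⬝ᵥ W.mulVec L) * (L ⬝ᵥ (W * Θ * Wᵀ * Θ * Wᵀ).mulVec L) +
        (N : ℝ) * (L ⬝ᵥ (W * Θ * W * Θ * Wᵀ).mulVec L) * (L ⬝ᵥ (Wᵀ).mulVec L) := by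
  set f : Matrix (Fin N) (Fin N) ℝ → ℝ := fun M => L ⬝ᵥ M.mulVec L with hf
  -- H acting on a vector
  have hHv : ∀ v : Fin N → ℝ, H.mulVec v = ((N : ℝ) * (L ⬝ᵥ v)) • L := by
    intro v
    rw [hH, smul_mulVec]
    have : (vecMulVec L L).mulVec v = (L ⬝ᵥ v) • L := by
      funext i
      simp only [vecMulVec, mulVec, dotProduct, Pi.smul_apply, smul_eq_mul, of_apply,
        Finset.sum_mul]
      exact Finset.sum_congr rfl fun j _ => by ring
    rw [this, smul_smul]
  -- key lemma: f (A * H * B) = N * f A * f B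
  have key : ∀ A B : Matrix (Fin N) (Fin N) ℝ, f (A * H * B) = (N : ℝ) * f A * f B := by
    intro A B
    have : (A * H * B).mulVec L = A.mulVec (H.mulVec (B.mulVec L)) := by
      rw [← mulVec_mulVec, ← mulVec_mulVec]
    simp only [hf, this, hHv (B.mulVec L), mulVec_smul, dotProduct_smul, smul_eq_mul]
    ring
  -- f of transpose
  have ftrans : ∀ M : Matrix (Fin N) (Fin N) ℝ, f Mᵀ = f M := by
    intro M
    simp only [hf]
    rw [dotProduct_mulVec, vecMul_transpose, dotProduct_comm]
  -- Θ is symmetric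
  have hvt : (vecMulVec L L)ᵀ = vecMulVec L L := by
    ext i j; simp [vecMulVec, mul_comm]
  have hΘt : Θᵀ = Θ := by
    rw [hΘ, hH, transpose_sub, transpose_one, transpose_smul, hvt]
  -- f linearity on sums
  have fadd : ∀ A B : Matrix (Fin N) (Fin N) ℝ, f (A + B) = f A + f B := by
    intro A B; simp [hf, add_mulVec]
  -- expansion of the matrix product
  have hHΘ : H + Θ = 1 := by rw [hΘ]; abel
  have expand : W ^ 2 * (Wᵀ) ^ 2 =
      W * H * W * H * Wᵀ * H * Wᵀ + W * H * W * H * Wᵀ * Θ * Wᵀ +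
      W * H * W * Θ * Wᵀ * H * Wᵀ + W * H * W * Θ * Wᵀ * Θ * Wᵀ +
      W * Θ * W * H * Wᵀ * H * Wᵀ + W * Θ * W * H * Wᵀ * Θ * Wᵀ +
      W * Θ * W * Θ * Wᵀ * H * Wᵀ + W * Θ * W * Θ * Wᵀ * Θ * Wᵀ := by
    have : W ^ 2 * (Wᵀ) ^ 2 = W * (H + Θ) * W * (H + Θ) * Wᵀ * (H + Θ) * Wᵀ := by
      rw [hHΘ]; noncomm_ring
    rw [this]; noncomm_ring
  -- scalar values
  have hNqch : (N : ℝ) * qch = f (W * Θ * W) := by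
    rcases Nat.eq_zero_or_pos N with h0 | hpos
    · subst h0; simp [hf, dotProduct]
    · rw [hqch]; field_simp; rfl
  have hNqdiv : (N : ℝ) * qdiv = f (W * Θ * Wᵀ) := by
    rcases Nat.eq_zero_or_pos N with h0 | hpos
    · subst h0; simp [hf, dotProduct]
    · rw [hqdiv]; field_simp; rfl
  have hfW : f W = p := hp.symm
  have hWt : f Wᵀ = p := by rw [ftrans]; exact hfW
  have hWtΘWt : f (Wᵀ * Θ * Wᵀ) = f (W * Θ * W) := by
    have : Wᵀ * Θ * Wᵀ = (W * Θ * W)ᵀ := by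
      rw [transpose_mul, transpose_mul, hΘt, mul_assoc]
    rw [this, ftrans]
  -- now compute each of the 8 terms
  have t1 : f (W * H * W * H * Wᵀ * H * Wᵀ) = (N:ℝ)^3 * p^4 := by
    have e1 : W * H * W * H * Wᵀ * H * Wᵀ = (W * H * W * H * Wᵀ) * H * Wᵀ := by
      noncomm_ring
    have e2 : W * H * W * H * Wᵀ = (W * H * W) * H * Wᵀ := by noncomm_ring
    rw [e1, key, e2, key, key, hWt, hfW]; ring
  have t2 : f (W * H * W * H * Wᵀ * Θ * Wᵀ) = (N:ℝ)^3 * p^2 * qch := by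
    have e : W * H * W * H * Wᵀ * Θ * Wᵀ = W * H * ((W * H * (Wᵀ * Θ * Wᵀ))) := by
      noncomm_ring
    have e2 : W * H * (W * H * (Wᵀ * Θ * Wᵀ)) = W * H * (W * H * (Wᵀ * Θ * Wᵀ)) := rfl
    rw [e]
    rw [show W * H * (W * H * (Wᵀ * Θ * Wᵀ)) = W * H * (W * H * (Wᵀ * Θ * Wᵀ)) from rfl]
    rw [show (W * H * (W * H * (Wᵀ * Θ * Wᵀ))) = W * H * (W * H * (Wᵀ * Θ * Wᵀ)) from rfl]
    rw [key W (W * H * (Wᵀ * Θ * Wᵀ)), key W (Wᵀ * Θ * Wᵀ), hWtΘWt, ← hNqch, hfW]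
    ring
  have t3 : f (W * H * W * Θ * Wᵀ * H * Wᵀ) = (N:ℝ)^3 * p^2 * qdiv := by
    have e : W * H * W * Θ * Wᵀ * H * Wᵀ = W * H * ((W * Θ * Wᵀ) * H * Wᵀ) := by
      noncomm_ring
    rw [e, key, key, hWt, ← hNqdiv, hfW]; ring
  have t4 : f (W * H * W * Θ * Wᵀ * Θ * Wᵀ) =
      (N : ℝ) * (L ⬝ᵥ W.mulVec L) * (L ⬝ᵥ (W * Θ * Wᵀ * Θ * Wᵀ).mulVec L) := by
    have e : W * H * W * Θ * Wᵀ * Θ * Wᵀ = W * H * (W * Θ * Wᵀ * Θ * Wᵀ) := by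
      noncomm_ring
    rw [e, key]
  have t5 : f (W * Θ * W * H * Wᵀ * H * Wᵀ) = (N:ℝ)^3 * p^2 * qch := by
    have e : W * Θ * W * H * Wᵀ * H * Wᵀ = (W * Θ * W) * H * (Wᵀ * H * Wᵀ) := by
      noncomm_ring
    rw [e, key, key, hWt, ← hNqch]; ring
  have t6 : f (W * Θ * W * H * Wᵀ * Θ * Wᵀ) = (N:ℝ)^3 * qch^2 := by
    have e : W * Θ * W * H * Wᵀ * Θ * Wᵀ = (W * Θ * W) * H * (Wᵀ * Θ * Wᵀ) := by
      noncomm_ring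
    rw [e, key, hWtΘWt, ← hNqch]; ring
  have t7 : f (W * Θ * W * Θ * Wᵀ * H * Wᵀ) =
      (N : ℝ) * (L ⬝ᵥ (W * Θ * W * Θ * Wᵀ).mulVec L) * (L ⬝ᵥ (Wᵀ).mulVec L) := by
    exact key (W * Θ * W * Θ * Wᵀ) Wᵀ
  -- assemble
  have lhs : f (W ^ 2 * (Wᵀ) ^ 2) =
      f (W * H * W * H * Wᵀ * H * Wᵀ) + f (W * H * W * H * Wᵀ * Θ * Wᵀ) +
      f (W * H * W * Θ * Wᵀ * H * Wᵀ) + f (W * H * W * Θ * Wᵀ * Θ * Wᵀ) +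
      f (W * Θ * W * H * Wᵀ * H * Wᵀ) + f (W * Θ * W * H * Wᵀ * Θ * Wᵀ) +
      f (W * Θ * W * Θ * Wᵀ * H * Wᵀ) + f (W * Θ * W * Θ * Wᵀ * Θ * Wᵀ) := by
    rw [expand]; simp only [fadd]
  show f _ = _
  rw [lhs, t1, t2, t3, t4, t5, t6, t7]
  ring
end

section
/- Let W⁰ be an N×N matrix with entries in {0,1}, p = (∑_{i,j} W⁰_{ij})/N², and define q_div = (∑_{i,j,k} W⁰_{ik}W⁰_{jk})/N³ − p², q_con = (∑_{i,j,k} W⁰_{ki}W⁰_{kj})/N³ − p², q_ch = (∑_{i,j,k} W⁰_{ik}W⁰_{kj})/N³ − p². Then |q_div| ≤ p(1−p), |q_con| ≤ p(1−p), and |q_ch| ≤ p(1−p). -/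
open Matrix

set_option maxHeartbeats 1000000 in
/-- **Range of motif frequencies (q_range).**
Let `W⁰` be an `N×N` matrix with entries in `{0,1}`, `p = (∑ᵢⱼ W⁰ᵢⱼ)/N²`, and
`q_div = (∑ᵢⱼₖ W⁰ᵢₖW⁰ⱼₖ)/N³ − p²`, `q_con = (∑ᵢⱼₖ W⁰ₖᵢW⁰ₖⱼ)/N³ − p²`,
`q_ch = (∑ᵢⱼₖ W⁰ᵢₖW⁰ₖⱼ)/N³ − p²`.  Then
`|q_div| ≤ p(1−p)`, `|q_con| ≤ p(1−p)`, `|q_ch| ≤ p(1−p)`. -/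
theorem stmt16 {N : ℕ} (W : Matrix (Fin N) (Fin N) ℝ)
    (hW : ∀ i j, W i j = 0 ∨ W i j = 1)
    (p qdiv qcon qch : ℝ)
    (hp : p = (∑ i, ∑ j, W i j) / (N : ℝ) ^ 2)
    (hqdiv : qdiv = (∑ i, ∑ j, ∑ k, W i k * W j k) / (N : ℝ) ^ 3 - p ^ 2)
    (hqcon : qcon = (∑ i, ∑ j, ∑ k, W k i * W k j) / (N : ℝ) ^ 3 - p ^ 2)
    (hqch : qch = (∑ i, ∑ j, ∑ k, W i k * W k j) / (N : ℝ) ^ 3 - p ^ 2) :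
    |qdiv| ≤ p * (1 - p) ∧ |qcon| ≤ p * (1 - p) ∧ |qch| ≤ p * (1 - p) := by
  rcases Nat.eq_zero_or_pos N with hN | hN
  · subst hN
    simp at hp hqdiv hqcon hqch
    subst hp
    simp at hqdiv hqcon hqch
    simp [hqdiv, hqcon, hqch]
  have hm : (0:ℝ) < (N:ℝ) := by exact_mod_cast hN
  set m : ℝ := (N:ℝ) with hmdef
  -- column and row sums
  set a : Fin N → ℝ := fun k => ∑ i, W i k with ha
  set b : Fin N → ℝ := fun k => ∑ j, W k j with hb
  set S : ℝ := ∑ i, ∑ j, W i j with hS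
  have hW0 : ∀ i j, 0 ≤ W i j := fun i j => by rcases hW i j with h | h <;> simp [h]
  have hW1 : ∀ i j, W i j ≤ 1 := fun i j => by rcases hW i j with h | h <;> simp [h]
  have haS : ∑ k, a k = S := by rw [hS, Finset.sum_comm]
  have hbS : ∑ k, b k = S := rfl
  have ha0 : ∀ k, 0 ≤ a k := fun k => Finset.sum_nonneg fun i _ => hW0 i k
  have hb0 : ∀ k, 0 ≤ b k := fun k => Finset.sum_nonneg fun j _ => hW0 k j
  have ham : ∀ k, a k ≤ m := fun k => by
    calc a k ≤ ∑ _i : Fin N, (1:ℝ) := Finset.sum_le_sum fun i _ => hW1 i k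
    _ = m := by simp [hmdef]
  have hbm : ∀ k, b k ≤ m := fun k => by
    calc b k ≤ ∑ _j : Fin N, (1:ℝ) := Finset.sum_le_sum fun j _ => hW1 k j
    _ = m := by simp [hmdef]
  have hS0 : 0 ≤ S := Finset.sum_nonneg fun i _ => Finset.sum_nonneg fun j _ => hW0 i j
  have hSm : S ≤ m^2 := by
    rw [← haS, sq]
    calc ∑ k, a k ≤ ∑ _k : Fin N, m := Finset.sum_le_sum fun k _ => ham k
    _ = m * m := by simp [mul_comm, hmdef]
  -- triple sum identities
  have hdiv : (∑ i, ∑ j, ∑ k, W i k * W j k) = ∑ k, (a k)^2 := by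
    have : ∀ k : Fin N, (a k)^2 = ∑ i, ∑ j, W i k * W j k := by
      intro k
      rw [sq, ha]
      rw [Finset.sum_mul_sum]
    rw [Finset.sum_congr rfl fun k _ => this k]
    calc (∑ i, ∑ j, ∑ k, W i k * W j k) = ∑ i, ∑ k, ∑ j, W i k * W j k :=
          Finset.sum_congr rfl fun i _ => Finset.sum_comm
    _ = ∑ k, ∑ i, ∑ j, W i k * W j k := Finset.sum_comm
  have hcon : (∑ i, ∑ j, ∑ k, W k i * W k j) = ∑ k, (b k)^2 := by
    have : ∀ k : Fin N, (b k)^2 = ∑ i, ∑ j, W k i * W k j := by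
      intro k
      rw [sq, hb]
      rw [Finset.sum_mul_sum]
    rw [Finset.sum_congr rfl fun k _ => this k]
    calc (∑ i, ∑ j, ∑ k, W k i * W k j) = ∑ i, ∑ k, ∑ j, W k i * W k j :=
          Finset.sum_congr rfl fun i _ => Finset.sum_comm
    _ = ∑ k, ∑ i, ∑ j, W k i * W k j := Finset.sum_comm
  have hch : (∑ i, ∑ j, ∑ k, W i k * W k j) = ∑ k, a k * b k := by
    have : ∀ k : Fin N, a k * b k = ∑ i, ∑ j, W i k * W k j := by
      intro k
      rw [ha, hb, Finset.sum_mul_sum]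
    rw [Finset.sum_congr rfl fun k _ => this k]
    calc (∑ i, ∑ j, ∑ k, W i k * W k j) = ∑ i, ∑ k, ∑ j, W i k * W k j :=
          Finset.sum_congr rfl fun i _ => Finset.sum_comm
    _ = ∑ k, ∑ i, ∑ j, W i k * W k j := Finset.sum_comm
  -- centered quantities
  have hcenter : ∀ f g : Fin N → ℝ, (∑ k, f k = S) → (∑ k, g k = S) →
      ∑ k, (f k - S/m) * (g k - S/m) = (∑ k, f k * g k) - S^2/m := by
    intro f g hf hg
    have hstep : ∀ k, (f k - S/m) * (g k - S/m)
        = f k * g k - (S/m) * g k - (S/m) * f k + (S/m)^2 := by intro k; ring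
    rw [Finset.sum_congr rfl fun k _ => hstep k]
    simp only [Finset.sum_add_distrib, Finset.sum_sub_distrib, ← Finset.mul_sum,
      Finset.sum_const, Finset.card_univ, Fintype.card_fin, nsmul_eq_mul, hf, hg]
    field_simp
    ring
  have hA := hcenter a a haS haS
  have hB := hcenter b b hbS hbS
  have hC := hcenter a b haS hbS
  set A : ℝ := (∑ k, (a k)^2) - S^2/m with hAdef
  set B : ℝ := (∑ k, (b k)^2) - S^2/m with hBdef
  set C : ℝ := (∑ k, a k * b k) - S^2/m with hCdef
  have hasq : (∑ k, (a k)^2) = ∑ k, a k * a k := by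
    exact Finset.sum_congr rfl fun k _ => sq (a k)
  have hbsq : (∑ k, (b k)^2) = ∑ k, b k * b k := by
    exact Finset.sum_congr rfl fun k _ => sq (b k)
  have hA0 : 0 ≤ A := by
    rw [hAdef, hasq, ← hA]
    exact Finset.sum_nonneg fun k _ => mul_self_nonneg _
  have hB0 : 0 ≤ B := by
    rw [hBdef, hbsq, ← hB]
    exact Finset.sum_nonneg fun k _ => mul_self_nonneg _
  have hCsq : C^2 ≤ A * B := by
    rw [hAdef, hBdef, hasq, hbsq, ← hA, ← hB, ← hC]
    have := Finset.sum_mul_sq_le_sq_mul_sq Finset.univ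
      (fun k => a k - S/m) (fun k => b k - S/m)
    simpa [pow_two] using this
  -- p facts
  have hp0 : 0 ≤ p := by rw [hp]; positivity
  have hp1 : p ≤ 1 := by
    rw [hp]
    rw [div_le_one (by positivity)]
    exact hSm
  -- upper bound sums
  have hAup : (∑ k, (a k)^2) ≤ m * S := by
    rw [← haS, Finset.mul_sum]
    exact Finset.sum_le_sum fun k _ => by
      rw [sq]; exact mul_le_mul_of_nonneg_right (ham k) (ha0 k)
  have hBup : (∑ k, (b k)^2) ≤ m * S := by
    rw [← hbS, Finset.mul_sum]
    exact Finset.sum_le_sum fun k _ => by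
      rw [sq]; exact mul_le_mul_of_nonneg_right (hbm k) (hb0 k)
  have hpS : p = S / m^2 := hp
  have hqdivA : qdiv = A / m^3 := by
    rw [hqdiv, hdiv, hAdef, hpS]
    field_simp
  have hqconB : qcon = B / m^3 := by
    rw [hqcon, hcon, hBdef, hpS]
    field_simp
  have hqchC : qch = C / m^3 := by
    rw [hqch, hch, hCdef, hpS]
    field_simp
  have hP : p * (1 - p) = (m * S - S^2/m) / m^3 := by
    rw [hpS]; field_simp
  have hdivle : qdiv ≤ p * (1 - p) := by
    rw [hqdivA, hP]
    apply div_le_div_of_nonneg_right _ (by positivity)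
    · rw [hAdef]; linarith
  have hconle : qcon ≤ p * (1 - p) := by
    rw [hqconB, hP]
    apply div_le_div_of_nonneg_right _ (by positivity)
    · rw [hBdef]; linarith
  have hdiv0 : 0 ≤ qdiv := by rw [hqdivA]; positivity
  have hcon0 : 0 ≤ qcon := by rw [hqconB]; positivity
  refine ⟨by rw [abs_of_nonneg hdiv0]; exact hdivle,
          by rw [abs_of_nonneg hcon0]; exact hconle, ?_⟩
  -- chain bound
  have hqchsq : qch^2 ≤ qdiv * qcon := by
    rw [hqchC, hqdivA, hqconB, div_pow, div_mul_div_comm, ← sq, ← pow_mul]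
    apply div_le_div_of_nonneg_right hCsq (by positivity)
  have hP0 : 0 ≤ p * (1 - p) := mul_nonneg hp0 (by linarith)
  have h1 : qdiv * qcon ≤ (p * (1-p))^2 := by
    calc qdiv * qcon ≤ (p*(1-p)) * qcon := mul_le_mul_of_nonneg_right hdivle hcon0
    _ ≤ (p*(1-p)) * (p*(1-p)) := mul_le_mul_of_nonneg_left hconle hP0
    _ = (p*(1-p))^2 := (sq _).symm
  exact abs_le.mpr (abs_le_of_sq_le_sq' (le_trans hqchsq h1) hP0)
end

section
/- Let W⁰ be an N×N matrix with entries in {0,1}, p = (∑_{i,j} W⁰_{ij})/N², and q_div = (∑_{i,j,k} W⁰_{ik}W⁰_{jk})/N³ − p². Then q_div = p(1−p) if and only if every column of W⁰ is constant, i.e. for each k, either W⁰_{ik} = 1 for all i or W⁰_{ik} = 0 for all i. -/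
open Matrix

/-- **Equality characterization for the diverging-motif bound (Appendix B).**
Let `W⁰` be an `N×N` matrix with entries in `{0,1}`, `p = (∑ᵢⱼ W⁰ᵢⱼ)/N²`, and
`q_div = (∑ᵢⱼₖ W⁰ᵢₖW⁰ⱼₖ)/N³ − p²`.  Then `q_div = p(1−p)` if and only if every
column of `W⁰` is constant: for each `k`, either `W⁰ᵢₖ = 1` for all `i`, or
`W⁰ᵢₖ = 0` for all `i`. -/
theorem stmt17 {N : ℕ} (W : Matrix (Fin N) (Fin N) ℝ)
    (hW : ∀ i j, W i j = 0 ∨ W i j = 1)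
    (p qdiv : ℝ)
    (hp : p = (∑ i, ∑ j, W i j) / (N : ℝ) ^ 2)
    (hqdiv : qdiv = (∑ i, ∑ j, ∑ k, W i k * W j k) / (N : ℝ) ^ 3 - p ^ 2) :
    qdiv = p * (1 - p) ↔
      ∀ k, (∀ i, W i k = 1) ∨ (∀ i, W i k = 0) := by
  subst hp hqdiv
  rcases Nat.eq_zero_or_pos N with h0 | hN
  · subst h0
    constructor
    · intro _ k; exact k.elim0
    · intro _; simp
  have hN0 : ((N : ℝ)) ≠ 0 := Nat.cast_ne_zero.mpr hN.ne'
  have hW0 : ∀ i j, 0 ≤ W i j := fun i j => by rcases hW i j with h | h <;> simp [h]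
  have hW1 : ∀ i j, W i j ≤ 1 := fun i j => by rcases hW i j with h | h <;> simp [h]
  set c : Fin N → ℝ := fun k => ∑ i, W i k with hc
  have hc0 : ∀ k, 0 ≤ c k := fun k => Finset.sum_nonneg fun i _ => hW0 i k
  have hcN : ∀ k, c k ≤ N := by
    intro k
    calc c k ≤ ∑ _i : Fin N, (1 : ℝ) := Finset.sum_le_sum fun i _ => hW1 i k
    _ = N := by simp
  -- rewrite the triple sum
  have hT : (∑ i, ∑ j, ∑ k, W i k * W j k) = ∑ k, c k * c k := by
    have h1 : ∀ i : Fin N, (∑ j, ∑ k, W i k * W j k) = ∑ k, W i k * c k := by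
      intro i
      rw [Finset.sum_comm]
      exact Finset.sum_congr rfl fun k _ => by rw [← Finset.mul_sum]
    calc (∑ i, ∑ j, ∑ k, W i k * W j k) = ∑ i, ∑ k, W i k * c k := by
          exact Finset.sum_congr rfl fun i _ => h1 i
      _ = ∑ k, ∑ i, W i k * c k := Finset.sum_comm
      _ = ∑ k, c k * c k := Finset.sum_congr rfl fun k _ => by rw [← Finset.sum_mul]
  have hS : (∑ i, ∑ j, W i j) = ∑ k, c k := Finset.sum_comm
  rw [hT, hS]
  set T : ℝ := ∑ k, c k * c k with hTdef
  set S : ℝ := ∑ k, c k with hSdef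
  set P : ℝ := S / (N : ℝ) ^ 2 with hP
  have key : (T / (N:ℝ)^3 - P ^ 2 = P * (1 - P)) ↔ T = N * S := by
    have h1 : T / (N:ℝ)^3 - P ^ 2 = P * (1 - P) ↔ T / (N:ℝ)^3 = P := by
      constructor <;> intro h <;> nlinarith [h]
    rw [h1, hP, div_eq_div_iff (by positivity) (by positivity),
        show S * (N:ℝ)^3 = ((N:ℝ) * S) * (N:ℝ)^2 by ring]
    exact mul_left_inj' (pow_ne_zero 2 hN0)
  rw [key]
  have key2 : T = (N:ℝ) * S ↔ ∀ k, c k = 0 ∨ c k = N := by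
    have hmul : (N:ℝ) * S - T = ∑ k, c k * ((N:ℝ) - c k) := by
      simp only [hTdef, hSdef, Finset.mul_sum, ← Finset.sum_sub_distrib]
      exact Finset.sum_congr rfl fun k _ => by ring
    constructor
    · intro h k
      have hz : ∑ k, c k * ((N:ℝ) - c k) = 0 := by rw [← hmul, h]; ring
      have := (Finset.sum_eq_zero_iff_of_nonneg (fun k _ =>
        mul_nonneg (hc0 k) (by linarith [hcN k]))).mp hz k (Finset.mem_univ k)
      rcases mul_eq_zero.mp this with h' | h'
      · exact Or.inl h'
      · exact Or.inr (by linarith)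
    · intro h
      have hz : ∑ k, c k * ((N:ℝ) - c k) = 0 := Finset.sum_eq_zero fun k _ => by
        rcases h k with h' | h' <;> simp [h']
      have := hmul.trans hz
      linarith
  rw [key2]
  constructor
  · intro h k
    rcases h k with h' | h'
    · right
      intro i
      exact (Finset.sum_eq_zero_iff_of_nonneg (fun i _ => hW0 i k)).mp h' i (Finset.mem_univ i)
    · left
      intro i
      have hz : ∑ i, (1 - W i k) = 0 := by
        rw [Finset.sum_sub_distrib]
        simp only [Finset.sum_const, Finset.card_univ, Fintype.card_fin, nsmul_eq_mul, mul_one]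
        rw [show (∑ i, W i k) = c k from rfl, h']
        ring
      have := (Finset.sum_eq_zero_iff_of_nonneg (fun i _ => by linarith [hW1 i k])).mp hz i
        (Finset.mem_univ i)
      linarith
  · intro h k
    rcases h k with h' | h'
    · right
      simp only [hc]
      rw [Finset.sum_congr rfl fun i _ => h' i]
      simp
    · left
      simp only [hc]
      rw [Finset.sum_congr rfl fun i _ => h' i]
      simp
end
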